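/- arXiv:2502.05545 — 2 statements merged into one kernel-verified Lean document; each statement's English description precedes it below -/
import Mathlib

section
/- There exists a unique z₀ > 0 such that H(z₀) = 0. -/
noncomputable section

/-- The error function `erf x = (2/√π) ∫₀ˣ exp(−s²) ds`. -/
def erf (x : ℝ) : ℝ := (2 / Real.sqrt Real.pi) * ∫ s in (0:ℝ)..x, Real.exp (-(s^2))

/-- The complementary error function. -/
def erfc (x : ℝ) : ℝ := 1 - erf x

/-- Physical data of the three-phase Stefan problem: positive thermal conductivities,
specific heats, mass density, latent heats, and temperatures `B > C > D`. -/
structure Params where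
  k₁ : ℝ
  k₂ : ℝ
  k₃ : ℝ
  c₁ : ℝ
  c₂ : ℝ
  c₃ : ℝ
  ρ : ℝ
  ℓ₁ : ℝ
  ℓ₂ : ℝ
  B : ℝ
  C : ℝ
  D : ℝ
  hk₁ : 0 < k₁
  hk₂ : 0 < k₂
  hk₃ : 0 < k₃
  hc₁ : 0 < c₁
  hc₂ : 0 < c₂
  hc₃ : 0 < c₃
  hρ : 0 < ρ
  hℓ₁ : 0 < ℓ₁
  hℓ₂ : 0 < ℓ₂
  hBC : C < B
  hCD : D < C

namespace Params

/-- Thermal diffusivity of phase 1. -/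
def α₁ (p : Params) : ℝ := p.k₁ / (p.ρ * p.c₁)

/-- Thermal diffusivity of phase 2. -/
def α₂ (p : Params) : ℝ := p.k₂ / (p.ρ * p.c₂)

/-- Thermal diffusivity of phase 3. -/
def α₃ (p : Params) : ℝ := p.k₃ / (p.ρ * p.c₃)

/-- Stefan number `Ste₁ = c₁(C−D)/ℓ₁`. -/
def Ste₁ (p : Params) : ℝ := p.c₁ * (p.C - p.D) / p.ℓ₁

/-- Stefan number `Ste₂ = c₂(B−C)/ℓ₂`. -/
def Ste₂ (p : Params) : ℝ := p.c₂ * (p.B - p.C) / p.ℓ₂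

/-- `φ(z) = z + (Ste₁/√π) exp(−z²)/erfc(z)`. -/
def φ (p : Params) (z : ℝ) : ℝ :=
  z + (p.Ste₁ / Real.sqrt Real.pi) * Real.exp (-(z^2)) / erfc z

/-- `H(z) = erf(z√(α₁/α₂)) − (Ste₂/√π)(ℓ₂/ℓ₁)√(k₂c₁/(k₁c₂)) exp(−z²α₁/α₂)/φ(z)`. -/
def H (p : Params) (z : ℝ) : ℝ :=
  erf (z * Real.sqrt (p.α₁ / p.α₂)) -
    (p.Ste₂ / Real.sqrt Real.pi) * (p.ℓ₂ / p.ℓ₁) *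
      Real.sqrt (p.k₂ * p.c₁ / (p.k₁ * p.c₂)) *
      (Real.exp (-(z^2) * (p.α₁ / p.α₂)) / p.φ z)

/-- `Q(z) = (ℓ₁/ℓ₂) φ(z) exp(z² α₁/α₂)`. -/
def Q (p : Params) (z : ℝ) : ℝ :=
  (p.ℓ₁ / p.ℓ₂) * p.φ z * Real.exp (z^2 * (p.α₁ / p.α₂))

/-- The function `T` arising from the Robin (convective) boundary condition with
heat-transfer coefficient `h₀` and bulk temperature `Ainf`. -/
def T (p : Params) (h₀ Ainf : ℝ) (z : ℝ) : ℝ :=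
  (p.Ste₂ / (Real.sqrt Real.pi * p.c₂)) * ((Ainf - p.B) / (p.B - p.C)) *
    Real.sqrt (p.k₃ * p.c₁ * p.c₃ / p.k₁) *
    (Real.exp (-(z^2) * p.α₁ * (1 / p.α₃ - 1 / p.α₂)) /
      (p.k₃ / (h₀ * Real.sqrt (Real.pi * p.α₃)) + erf (z * Real.sqrt (p.α₁ / p.α₃)))) -
  z * Real.exp (z^2 * (p.α₁ / p.α₂))

/-- The function `V` arising from the Dirichlet boundary condition with temperature `A`. -/
def V (p : Params) (A : ℝ) (z : ℝ) : ℝ :=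
  ((A - p.B) / p.ℓ₂) * Real.sqrt (p.c₁ * p.c₃ * p.k₃ / (Real.pi * p.k₁)) *
    (Real.exp (-(z^2) * (p.α₁ / p.α₃ - p.α₁ / p.α₂)) / erf (z * Real.sqrt (p.α₁ / p.α₃))) -
  z * Real.exp (z^2 * (p.α₁ / p.α₂))

/-- The function `P` arising from the Neumann boundary condition with flux coefficient `q₀`. -/
def P (p : Params) (q₀ : ℝ) (z : ℝ) : ℝ :=
  Real.exp (z^2 * (p.α₁ / p.α₂)) *
    (-z + (q₀ / p.ℓ₂) * Real.sqrt (p.c₁ / (p.ρ * p.k₁)) * Real.exp (-(z^2) * (p.α₁ / p.α₃)))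

/-- Critical heat-transfer coefficient `h₂`. -/
def h2 (p : Params) (Ainf z₀ : ℝ) : ℝ :=
  ((p.B - p.C) / (Ainf - p.B)) *
    Real.sqrt (p.k₂ * p.k₃ * p.c₂ / (Real.pi * p.c₃ * p.α₃)) *
    (1 / erf (z₀ * Real.sqrt (p.α₁ / p.α₂)))

/-- Critical heat-flux coefficient `q₂`. -/
def q2 (p : Params) (z₀ : ℝ) : ℝ :=
  p.k₂ * (p.B - p.C) / (Real.sqrt (p.α₂ * Real.pi) * erf (z₀ * Real.sqrt (p.α₁ / p.α₂)))

end Params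

/- ===== auxiliary lemmas ===== -/
section Aux

open Real MeasureTheory Set Filter intervalIntegral Topology

lemma gauss_cont : Continuous fun s : ℝ => Real.exp (-(s^2)) := by continuity

lemma sqrt_pi_pos : 0 < Real.sqrt Real.pi := Real.sqrt_pos.2 Real.pi_pos

lemma erf_hasDerivAt (x : ℝ) :
    HasDerivAt erf (2 / Real.sqrt Real.pi * Real.exp (-(x^2))) x := by
  have h : HasDerivAt (fun y => ∫ s in (0:ℝ)..y, Real.exp (-(s^2))) (Real.exp (-(x^2))) x :=
    intervalIntegral.integral_hasDerivAt_right (gauss_cont.intervalIntegrable _ _)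
      (gauss_cont.stronglyMeasurableAtFilter _ _) gauss_cont.continuousAt
  exact h.const_mul (2 / Real.sqrt Real.pi)

lemma erf_continuous : Continuous erf :=
  continuous_iff_continuousAt.2 fun x => (erf_hasDerivAt x).continuousAt

lemma erf_strictMono : StrictMono erf := by
  apply strictMono_of_deriv_pos
  intro x
  rw [(erf_hasDerivAt x).deriv]
  positivity

lemma erf_zero : erf 0 = 0 := by simp [erf]

lemma erf_tendsto : Tendsto erf atTop (𝓝 1) := by
  have hint : IntegrableOn (fun s : ℝ => Real.exp (-(s^2))) (Ioi 0) := by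
    have := (integrable_exp_neg_mul_sq (one_pos)).integrableOn (s := Ioi (0:ℝ))
    simpa using this
  have h := intervalIntegral_tendsto_integral_Ioi (0:ℝ) hint tendsto_id
  have h2 : (∫ x in Ioi (0:ℝ), Real.exp (-(x^2))) = Real.sqrt Real.pi / 2 := by
    have := integral_gaussian_Ioi 1
    simpa using this
  have h3 := h.const_mul (2 / Real.sqrt Real.pi)
  rw [h2] at h3
  have h4 : 2 / Real.sqrt Real.pi * (Real.sqrt Real.pi / 2) = 1 := by
    field_simp
  rw [h4] at h3; exact h3

lemma erf_lt_one (x : ℝ) : erf x < 1 := by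
  have h1 : erf (x+1) ≤ 1 := by
    refine ge_of_tendsto erf_tendsto ?_
    filter_upwards [eventually_ge_atTop (x+1)] with y hy
    exact erf_strictMono.monotone hy
  exact lt_of_lt_of_le (erf_strictMono (by linarith)) h1

lemma erfc_pos (x : ℝ) : 0 < erfc x := by
  have := erf_lt_one x; simp only [erfc]; linarith

lemma erfc_continuous : Continuous erfc := continuous_const.sub erf_continuous

lemma erfc_zero : erfc 0 = 1 := by simp [erfc, erf_zero]

lemma erfc_tendsto : Tendsto erfc atTop (𝓝 0) := by
  have := (tendsto_const_nhds (x := (1:ℝ)) (f := atTop)).sub erf_tendsto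
  rw [sub_self] at this; exact this

lemma neg_sq_hasDerivAt (x : ℝ) : HasDerivAt (fun y : ℝ => -(y^2)) (-(2*x)) x := by
  exact (hasDerivAt_pow 2 x).neg.congr_deriv (by simp)

lemma gaussE_hasDerivAt (x : ℝ) :
    HasDerivAt (fun y : ℝ => Real.exp (-(y^2))) (Real.exp (-(x^2)) * (-(2*x))) x :=
  (neg_sq_hasDerivAt x).exp

lemma erfc_hasDerivAt (x : ℝ) :
    HasDerivAt erfc (-(2 / Real.sqrt Real.pi * Real.exp (-(x^2)))) x := by
  exact (erf_hasDerivAt x).const_sub 1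

/-- Auxiliary function for the Mills-ratio bound. -/
def millsF (x : ℝ) : ℝ := Real.exp (-(x^2)) / (Real.sqrt Real.pi * x) - erfc x

lemma millsF_hasDerivAt {x : ℝ} (hx : x ≠ 0) :
    HasDerivAt millsF (-(Real.exp (-(x^2)) / (Real.sqrt Real.pi * x^2))) x := by
  have hden : HasDerivAt (fun y : ℝ => Real.sqrt Real.pi * y) (Real.sqrt Real.pi) x := by
    simpa using (hasDerivAt_id x).const_mul (Real.sqrt Real.pi)
  have hne : Real.sqrt Real.pi * x ≠ 0 := mul_ne_zero (ne_of_gt sqrt_pi_pos) hx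
  have hq := (gaussE_hasDerivAt x).div hden hne
  have h := hq.sub (erfc_hasDerivAt x)
  refine h.congr_deriv ?_
  have hπ := sqrt_pi_pos.ne'
  field_simp
  ring_nf

lemma millsF_tendsto : Tendsto millsF atTop (𝓝 0) := by
  have h1 : Tendsto (fun x : ℝ => Real.exp (-(x^2)) / (Real.sqrt Real.pi * x)) atTop (𝓝 0) := by
    apply squeeze_zero' (g := fun x : ℝ => Real.exp (-x))
    · filter_upwards [eventually_ge_atTop (1:ℝ)] with x hx
      positivity
    · filter_upwards [eventually_ge_atTop (1:ℝ)] with x hx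
      have h1π : (1:ℝ) ≤ Real.sqrt Real.pi := by
        rw [show (1:ℝ) = Real.sqrt 1 by simp]
        exact Real.sqrt_le_sqrt (by linarith [Real.pi_gt_three])
      have hden : (1:ℝ) ≤ Real.sqrt Real.pi * x := by nlinarith
      calc Real.exp (-(x^2)) / (Real.sqrt Real.pi * x) ≤ Real.exp (-(x^2)) := by
            rw [div_le_iff₀ (by linarith)]; nlinarith [Real.exp_pos (-(x^2))]
        _ ≤ Real.exp (-x) := Real.exp_le_exp.2 (by nlinarith)
    · exact Real.tendsto_exp_neg_atTop_nhds_zero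
  have := h1.sub erfc_tendsto; rw [sub_zero] at this; exact this

lemma millsF_nonneg {x : ℝ} (hx : 0 < x) : 0 ≤ millsF x := by
  have hanti : StrictAntiOn millsF (Ioi (0:ℝ)) := by
    apply strictAntiOn_of_deriv_neg (convex_Ioi 0)
    · intro y hy
      exact ((millsF_hasDerivAt (ne_of_gt hy)).continuousAt).continuousWithinAt
    · intro y hy
      rw [interior_Ioi] at hy
      rw [(millsF_hasDerivAt (ne_of_gt hy)).deriv]
      have hy2 : 0 < y^2 := pow_pos hy 2
      have : 0 < Real.exp (-(y^2)) / (Real.sqrt Real.pi * y^2) :=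
        div_pos (Real.exp_pos _) (mul_pos sqrt_pi_pos hy2)
      linarith
  refine le_of_tendsto millsF_tendsto ?_
  filter_upwards [eventually_ge_atTop (x+1)] with y hy
  exact (hanti hx (by simp only [mem_Ioi]; linarith) (by linarith)).le

lemma erfc_le {x : ℝ} (hx : 0 < x) :
    erfc x ≤ Real.exp (-(x^2)) / (Real.sqrt Real.pi * x) := by
  have := millsF_nonneg hx; unfold millsF at this; linarith

/-- The inverse Mills ratio `exp(−z²)/erfc z`. -/
def millsG (z : ℝ) : ℝ := Real.exp (-(z^2)) / erfc z

lemma millsG_pos (z : ℝ) : 0 < millsG z := div_pos (Real.exp_pos _) (erfc_pos z)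

lemma millsG_zero : millsG 0 = 1 := by simp [millsG, erfc_zero]

lemma millsG_continuous : Continuous millsG :=
  gauss_cont.div erfc_continuous fun z => (erfc_pos z).ne'

lemma millsG_hasDerivAt (z : ℝ) :
    HasDerivAt millsG
      ((Real.exp (-(z^2)) * (-(2*z)) * erfc z -
        Real.exp (-(z^2)) * (-(2 / Real.sqrt Real.pi * Real.exp (-(z^2))))) / (erfc z)^2) z :=
  (gaussE_hasDerivAt z).div (erfc_hasDerivAt z) (erfc_pos z).ne'

lemma millsG_mono : MonotoneOn millsG (Ici 0) := by
  apply monotoneOn_of_deriv_nonneg (convex_Ici 0) millsG_continuous.continuousOn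
  · intro z _
    exact (millsG_hasDerivAt z).differentiableAt.differentiableWithinAt
  · intro z hz
    rw [interior_Ici] at hz
    have hz' : 0 < z := hz
    have hzne : z ≠ 0 := ne_of_gt hz'
    rw [(millsG_hasDerivAt z).deriv]
    apply div_nonneg _ (sq_nonneg _)
    have hE := Real.exp_pos (-(z^2))
    have hb := erfc_le hz'
    have hπ := sqrt_pi_pos
    have hπne : Real.sqrt Real.pi ≠ 0 := ne_of_gt hπ
    have key : 2 * z * erfc z ≤ 2 / Real.sqrt Real.pi * Real.exp (-(z^2)) := by
      have h1 : 2 * z * erfc z ≤ 2 * z * (Real.exp (-(z^2)) / (Real.sqrt Real.pi * z)) :=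
        mul_le_mul_of_nonneg_left hb (by linarith)
      have h2 : 2 * z * (Real.exp (-(z^2)) / (Real.sqrt Real.pi * z)) =
          2 / Real.sqrt Real.pi * Real.exp (-(z^2)) := by
        field_simp
      linarith
    nlinarith

/-- The generic `φ`-type function. -/
def psiAux (c : ℝ) (z : ℝ) : ℝ := z + c * millsG z

lemma psiAux_pos {c : ℝ} (hc : 0 < c) {z : ℝ} (hz : 0 ≤ z) : 0 < psiAux c z := by
  have := millsG_pos z; unfold psiAux; nlinarith

lemma psiAux_strictMonoOn {c : ℝ} (hc : 0 < c) : StrictMonoOn (psiAux c) (Ici 0) := by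
  intro x hx y hy hxy
  have h := millsG_mono hx hy hxy.le
  unfold psiAux
  nlinarith

lemma psiAux_continuous (c : ℝ) : Continuous (psiAux c) :=
  continuous_id.add (continuous_const.mul millsG_continuous)

lemma psiAux_zero (c : ℝ) : psiAux c 0 = c := by simp [psiAux, millsG_zero]

/-- The generic `H`-type function. -/
def hAux (c b K : ℝ) (z : ℝ) : ℝ :=
  erf (z * Real.sqrt b) - K * (Real.exp (-(z^2) * b) / psiAux c z)

lemma hAux_strictMonoOn {c b K : ℝ} (hc : 0 < c) (hb : 0 < b) (hK : 0 < K) :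
    StrictMonoOn (hAux c b K) (Ici 0) := by
  intro x hx y hy hxy
  simp only [mem_Ici] at hx hy
  have h1 : erf (x * Real.sqrt b) < erf (y * Real.sqrt b) :=
    erf_strictMono (mul_lt_mul_of_pos_right hxy (Real.sqrt_pos.2 hb))
  have hex : Real.exp (-(y^2) * b) < Real.exp (-(x^2) * b) := by
    apply Real.exp_lt_exp.2
    have : x^2 < y^2 := by nlinarith
    nlinarith
  have hψx : 0 < psiAux c x := psiAux_pos hc hx
  have hψy : 0 < psiAux c y := psiAux_pos hc hy
  have hψ : psiAux c x < psiAux c y := psiAux_strictMonoOn hc hx (hx.trans hxy.le) hxy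
  have hq : Real.exp (-(y^2) * b) / psiAux c y < Real.exp (-(x^2) * b) / psiAux c x := by
    apply div_lt_div₀ hex hψ.le (Real.exp_pos _).le hψx
  have := mul_lt_mul_of_pos_left hq hK
  unfold hAux
  linarith

lemma hAux_zero_neg {c b K : ℝ} (hc : 0 < c) (hK : 0 < K) : hAux c b K 0 < 0 := by
  have : hAux c b K 0 = -(K / c) := by
    simp [hAux, erf_zero, psiAux_zero, div_eq_mul_inv]
  rw [this]
  have : 0 < K / c := div_pos hK hc
  linarith

lemma hAux_tendsto {c b K : ℝ} (hc : 0 < c) (hb : 0 < b) (hK : 0 < K) :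
    Tendsto (hAux c b K) atTop (𝓝 1) := by
  have h1 : Tendsto (fun z : ℝ => erf (z * Real.sqrt b)) atTop (𝓝 1) :=
    erf_tendsto.comp (tendsto_id.atTop_mul_const (Real.sqrt_pos.2 hb))
  have hexp : Tendsto (fun z : ℝ => Real.exp (-(z^2) * b)) atTop (𝓝 0) := by
    apply Real.tendsto_exp_atBot.comp
    have h2 : Tendsto (fun z : ℝ => z^2 * b) atTop atTop :=
      (tendsto_pow_atTop two_ne_zero).atTop_mul_const hb
    have h3 : Tendsto (fun z : ℝ => -(z^2 * b)) atTop atBot := tendsto_neg_atBot_iff.2 h2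
    simpa [neg_mul] using h3
  have h2 : Tendsto (fun z : ℝ => K * (Real.exp (-(z^2) * b) / psiAux c z)) atTop (𝓝 0) := by
    apply squeeze_zero'
    · filter_upwards [eventually_ge_atTop (0:ℝ)] with z hz
      have := psiAux_pos hc hz
      positivity
    · filter_upwards [eventually_ge_atTop (0:ℝ)] with z hz
      show K * (Real.exp (-(z^2) * b) / psiAux c z) ≤ K / c * Real.exp (-(z^2) * b)
      have hψ : psiAux c 0 ≤ psiAux c z := by
        rcases eq_or_lt_of_le hz with h | h
        · rw [← h]
        · exact (psiAux_strictMonoOn hc (mem_Ici.2 le_rfl) hz h).le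
      rw [psiAux_zero] at hψ
      have hψ0 : (0:ℝ) < c := hc
      have hE := (Real.exp_pos (-(z^2) * b)).le
      rw [div_mul_eq_mul_div, mul_div_assoc]
      apply mul_le_mul_of_nonneg_left _ hK.le
      apply div_le_div_of_nonneg_left hE hc (by linarith)
    · simpa using hexp.const_mul (K / c)
  have h := h1.sub h2
  rw [sub_zero] at h; exact h

lemma hAux_continuousOn {c : ℝ} (hc : 0 < c) (b K : ℝ) :
    ContinuousOn (hAux c b K) (Ici 0) := by
  apply ContinuousOn.sub
  · exact (erf_continuous.comp (continuous_id.mul continuous_const)).continuousOn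
  · apply ContinuousOn.mul continuousOn_const
    apply ContinuousOn.div
    · exact (Real.continuous_exp.comp (by continuity)).continuousOn
    · exact (psiAux_continuous c).continuousOn
    · intro z hz
      exact (psiAux_pos hc hz).ne'

lemma hAux_unique_zero {c b K : ℝ} (hc : 0 < c) (hb : 0 < b) (hK : 0 < K) :
    ∃! z₀ : ℝ, 0 < z₀ ∧ hAux c b K z₀ = 0 := by
  obtain ⟨z₁, hz₁pos, hz₁⟩ : ∃ z₁, 0 < hAux c b K z₁ ∧ (1:ℝ) ≤ z₁ := by
    have h := ((hAux_tendsto hc hb hK).eventually (eventually_gt_nhds (by norm_num : (0:ℝ) < 1))).and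
      (eventually_ge_atTop (1:ℝ))
    exact h.exists
  have h01 : (0:ℝ) ≤ z₁ := by linarith
  have hcont : ContinuousOn (hAux c b K) (Icc 0 z₁) :=
    (hAux_continuousOn hc b K).mono (fun x hx => hx.1)
  have hmem : (0:ℝ) ∈ Icc (hAux c b K 0) (hAux c b K z₁) :=
    ⟨(hAux_zero_neg hc hK).le, hz₁pos.le⟩
  obtain ⟨z₀, hz₀mem, hz₀⟩ := intermediate_value_Icc h01 hcont hmem
  have hz₀pos : 0 < z₀ := by
    rcases eq_or_lt_of_le hz₀mem.1 with h | h
    · exfalso; rw [← h] at hz₀; have := hAux_zero_neg hc hK (b := b); rw [hz₀] at this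
      exact lt_irrefl 0 this
    · exact h
  refine ⟨z₀, ⟨hz₀pos, hz₀⟩, ?_⟩
  rintro y ⟨hy, hy0⟩
  exact (hAux_strictMonoOn hc hb hK).injOn (mem_Ici.2 hy.le) (mem_Ici.2 hz₀pos.le)
    (hy0.trans hz₀.symm)

end Aux

/-- there exists a unique `z₀ > 0` with `H(z₀) = 0`. -/
theorem H_unique_positive_zero (p : Params) :
    ∃! z₀ : ℝ, 0 < z₀ ∧ p.H z₀ = 0 := by
  have hα₁ : 0 < p.α₁ := div_pos p.hk₁ (mul_pos p.hρ p.hc₁)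
  have hα₂ : 0 < p.α₂ := div_pos p.hk₂ (mul_pos p.hρ p.hc₂)
  have hb : 0 < p.α₁ / p.α₂ := div_pos hα₁ hα₂
  have hc : 0 < p.Ste₁ / Real.sqrt Real.pi := by
    have h1 : 0 < p.Ste₁ := div_pos (mul_pos p.hc₁ (by linarith [p.hCD])) p.hℓ₁
    exact div_pos h1 sqrt_pi_pos
  have hK : 0 < p.Ste₂ / Real.sqrt Real.pi * (p.ℓ₂ / p.ℓ₁) *
      Real.sqrt (p.k₂ * p.c₁ / (p.k₁ * p.c₂)) := by
    have h1 : 0 < p.Ste₂ := div_pos (mul_pos p.hc₂ (by linarith [p.hBC])) p.hℓ₂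
    have h2 : 0 < p.k₂ * p.c₁ / (p.k₁ * p.c₂) :=
      div_pos (mul_pos p.hk₂ p.hc₁) (mul_pos p.hk₁ p.hc₂)
    have := Real.sqrt_pos.2 h2
    have := sqrt_pi_pos
    have := p.hℓ₁
    have := p.hℓ₂
    positivity
  have hHeq : p.H = hAux (p.Ste₁ / Real.sqrt Real.pi) (p.α₁ / p.α₂)
      (p.Ste₂ / Real.sqrt Real.pi * (p.ℓ₂ / p.ℓ₁) *
        Real.sqrt (p.k₂ * p.c₁ / (p.k₁ * p.c₂))) := by
    funext z
    simp only [Params.H, hAux, Params.φ, psiAux, millsG, mul_div_assoc]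
  rw [hHeq]
  exact hAux_unique_zero hc hb hK
end
end

section
/- The function Q is strictly increasing on [0, ∞), satisfies Q(0) = (ℓ₁/ℓ₂)·Ste₁/√π, and Q(z) tends to +∞ as z → +∞. -/
noncomputable section

open MeasureTheory Set Filter

lemma gaussInt : MeasureTheory.Integrable (fun s : ℝ => Real.exp (-(s^2))) := by
  have h := integrable_exp_neg_mul_sq (b := (1:ℝ)) one_pos
  simpa using h

lemma IG_shift (z δ : ℝ) :
    ∫ s in Ioi (z + δ), Real.exp (-(s^2)) = ∫ s in Ioi z, Real.exp (-((s + δ)^2)) := by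
  have me : MeasurableEmbedding (fun x : ℝ => x + δ) :=
    (MeasurableEquiv.addRight δ).measurableEmbedding
  have hmap : Measure.map (fun x : ℝ => x + δ) volume = volume :=
    map_add_right_eq_self volume δ
  have h := me.setIntegral_map (μ := volume) (fun s => Real.exp (-(s^2))) (Ioi (z + δ))
  rw [hmap] at h
  have hpre : (fun x : ℝ => x + δ) ⁻¹' Ioi (z + δ) = Ioi z := by
    ext x; simp
  rw [h, hpre]

lemma IG_pos (z : ℝ) : 0 < ∫ s in Ioi z, Real.exp (-(s^2)) := by
  rw [setIntegral_pos_iff_support_of_nonneg_ae]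
  · have : Function.support (fun s : ℝ => Real.exp (-(s^2))) = univ := by
      ext x; simp [Real.exp_ne_zero]
    rw [this, univ_inter, Real.volume_Ioi]
    simp
  · exact Filter.Eventually.of_forall fun x => (Real.exp_pos _).le
  · exact gaussInt.integrableOn

lemma IG_total : ∫ s in Ioi (0:ℝ), Real.exp (-(s^2)) = Real.sqrt Real.pi / 2 := by
  have h := integral_gaussian_Ioi 1
  simpa using h

lemma erfc_eq_IG {z : ℝ} (hz : 0 ≤ z) :
    erfc z = (2 / Real.sqrt Real.pi) * ∫ s in Ioi z, Real.exp (-(s^2)) := by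
  have hsplit : (∫ s in (0:ℝ)..z, Real.exp (-(s^2))) + (∫ s in Ioi z, Real.exp (-(s^2)))
      = ∫ s in Ioi (0:ℝ), Real.exp (-(s^2)) := by
    rw [intervalIntegral.integral_of_le hz, ← setIntegral_union (Ioc_disjoint_Ioi le_rfl)
      measurableSet_Ioi gaussInt.integrableOn gaussInt.integrableOn,
      Ioc_union_Ioi_eq_Ioi hz]
  have hs : Real.sqrt Real.pi ≠ 0 := by positivity
  rw [erfc, erf]
  rw [IG_total] at hsplit
  have h2 : (∫ s in (0:ℝ)..z, Real.exp (-(s^2)))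
      = Real.sqrt Real.pi / 2 - ∫ s in Ioi z, Real.exp (-(s^2)) := by linarith
  rw [h2]
  field_simp
  ring

lemma erfc_pos_s3 {z : ℝ} (hz : 0 ≤ z) : 0 < erfc z := by
  rw [erfc_eq_IG hz]
  have := IG_pos z
  positivity

lemma key_lt {z z' : ℝ} (hz : 0 ≤ z) (h : z < z') :
    Real.exp (-(z^2)) * (∫ s in Ioi z', Real.exp (-(s^2)))
      < Real.exp (-(z'^2)) * ∫ s in Ioi z, Real.exp (-(s^2)) := by
  set δ := z' - z with hδ
  have hδpos : 0 < δ := by simp [hδ]; linarith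
  have hz' : z' = z + δ := by ring
  have hshift : (∫ s in Ioi z', Real.exp (-(s^2)))
      = ∫ s in Ioi z, Real.exp (-((s + δ)^2)) := by
    rw [hz']; exact IG_shift z δ
  have hint1 : MeasureTheory.IntegrableOn
      (fun s : ℝ => Real.exp (-(z^2)) * Real.exp (-((s + δ)^2))) (Ioi z) := by
    have hcomp : MeasureTheory.Integrable (fun s : ℝ => Real.exp (-((s + δ)^2))) := by
      have := ((measurePreserving_add_right volume δ).integrable_comp
        gaussInt.aestronglyMeasurable).2 gaussInt
      simpa [Function.comp_def] using this
    exact (hcomp.const_mul _).integrableOn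
  have hint2 : MeasureTheory.IntegrableOn
      (fun s : ℝ => Real.exp (-(z'^2)) * Real.exp (-(s^2))) (Ioi z) :=
    (gaussInt.const_mul _).integrableOn
  have hlt : ∀ s ∈ Ioi z,
      Real.exp (-(z^2)) * Real.exp (-((s + δ)^2))
        < Real.exp (-(z'^2)) * Real.exp (-(s^2)) := by
    intro s hs
    rw [← Real.exp_add, ← Real.exp_add]
    apply Real.exp_lt_exp.2
    have hsz : z < s := hs
    nlinarith
  have hdiff : 0 < ∫ s in Ioi z,
      (Real.exp (-(z'^2)) * Real.exp (-(s^2))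
        - Real.exp (-(z^2)) * Real.exp (-((s + δ)^2))) := by
    rw [setIntegral_pos_iff_support_of_nonneg_ae]
    · have hsub : Ioi z ⊆ Function.support (fun s : ℝ =>
          Real.exp (-(z'^2)) * Real.exp (-(s^2))
            - Real.exp (-(z^2)) * Real.exp (-((s + δ)^2))) ∩ Ioi z := by
        intro s hs
        exact ⟨by simp only [Function.mem_support]; exact sub_ne_zero.2 (hlt s hs).ne', hs⟩
      calc (0:ENNReal) < volume (Ioi z) := by rw [Real.volume_Ioi]; simp
        _ ≤ _ := measure_mono hsub
    · show ∀ᵐ s ∂(volume.restrict (Ioi z)), _ ≤ _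
      rw [MeasureTheory.ae_restrict_iff' measurableSet_Ioi]
      exact Filter.Eventually.of_forall fun s hs => (sub_nonneg.2 (hlt s hs).le)
    · exact hint2.sub hint1
  rw [MeasureTheory.integral_sub hint2 hint1,
    MeasureTheory.integral_const_mul, MeasureTheory.integral_const_mul] at hdiff
  rw [hshift]
  linarith

lemma ratio_lt {z z' : ℝ} (hz : 0 ≤ z) (h : z < z') :
    Real.exp (-(z^2)) / erfc z < Real.exp (-(z'^2)) / erfc z' := by
  have hz' : (0:ℝ) ≤ z' := le_of_lt (lt_of_le_of_lt hz h)
  rw [div_lt_div_iff₀ (erfc_pos_s3 hz) (erfc_pos_s3 hz')]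
  rw [erfc_eq_IG hz, erfc_eq_IG hz']
  have hc : 0 < 2 / Real.sqrt Real.pi := by positivity
  have := key_lt hz h
  calc Real.exp (-(z^2)) * (2 / Real.sqrt Real.pi * ∫ s in Ioi z', Real.exp (-(s^2)))
      = (2 / Real.sqrt Real.pi) * (Real.exp (-(z^2)) * ∫ s in Ioi z', Real.exp (-(s^2))) := by ring
    _ < (2 / Real.sqrt Real.pi) * (Real.exp (-(z'^2)) * ∫ s in Ioi z, Real.exp (-(s^2))) :=
        by exact mul_lt_mul_of_pos_left this hc
    _ = Real.exp (-(z'^2)) * (2 / Real.sqrt Real.pi * ∫ s in Ioi z, Real.exp (-(s^2))) := by ring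


/-- `Q` is strictly increasing on `[0, ∞)`, `Q(0) = (ℓ₁/ℓ₂)Ste₁/√π`,
and `Q(z) → +∞` as `z → +∞`. -/
theorem Q_properties (p : Params) :
    (∀ z z' : ℝ, 0 ≤ z → z < z' → p.Q z < p.Q z') ∧
    p.Q 0 = (p.ℓ₁ / p.ℓ₂) * p.Ste₁ / Real.sqrt Real.pi ∧
    Filter.Tendsto p.Q Filter.atTop Filter.atTop := by
  have hSte : 0 < p.Ste₁ :=
    div_pos (mul_pos p.hc₁ (sub_pos.2 p.hCD)) p.hℓ₁
  have hsp : 0 < Real.sqrt Real.pi := Real.sqrt_pos.2 Real.pi_pos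
  have hα₁ : 0 < p.α₁ := div_pos p.hk₁ (mul_pos p.hρ p.hc₁)
  have hα₂ : 0 < p.α₂ := div_pos p.hk₂ (mul_pos p.hρ p.hc₂)
  have hr : 0 < p.α₁ / p.α₂ := div_pos hα₁ hα₂
  have hl : 0 < p.ℓ₁ / p.ℓ₂ := div_pos p.hℓ₁ p.hℓ₂
  -- φ bounds
  have hφ_ge : ∀ z : ℝ, 0 ≤ z → z < p.φ z := by
    intro z hz
    have h1 : 0 < (p.Ste₁ / Real.sqrt Real.pi) * Real.exp (-(z^2)) / erfc z :=
      div_pos (mul_pos (div_pos hSte hsp) (Real.exp_pos _)) (erfc_pos_s3 hz)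
    unfold Params.φ; linarith
  have hφ_pos : ∀ z : ℝ, 0 ≤ z → 0 < p.φ z := fun z hz => lt_of_le_of_lt hz (hφ_ge z hz)
  have hφ_mono : ∀ z z' : ℝ, 0 ≤ z → z < z' → p.φ z < p.φ z' := by
    intro z z' hz h
    have hg := ratio_lt hz h
    have hc : 0 < p.Ste₁ / Real.sqrt Real.pi := by positivity
    unfold Params.φ
    have : (p.Ste₁ / Real.sqrt Real.pi) * (Real.exp (-(z^2)) / erfc z)
        < (p.Ste₁ / Real.sqrt Real.pi) * (Real.exp (-(z'^2)) / erfc z') :=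
      mul_lt_mul_of_pos_left hg hc
    rw [mul_div_assoc, mul_div_assoc]
    linarith
  refine ⟨?_, ?_, ?_⟩
  · intro z z' hz h
    unfold Params.Q
    have hz2 : z^2 < z'^2 := by nlinarith
    have hE : Real.exp (z^2 * (p.α₁ / p.α₂)) < Real.exp (z'^2 * (p.α₁ / p.α₂)) :=
      Real.exp_lt_exp.2 (by nlinarith)
    have h1 : p.φ z * Real.exp (z^2 * (p.α₁ / p.α₂))
        < p.φ z' * Real.exp (z'^2 * (p.α₁ / p.α₂)) :=
      mul_lt_mul'' (hφ_mono z z' hz h) hE (hφ_pos z hz).le (Real.exp_pos _).le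
    calc p.ℓ₁ / p.ℓ₂ * p.φ z * Real.exp (z^2 * (p.α₁ / p.α₂))
        = (p.ℓ₁ / p.ℓ₂) * (p.φ z * Real.exp (z^2 * (p.α₁ / p.α₂))) := by ring
      _ < (p.ℓ₁ / p.ℓ₂) * (p.φ z' * Real.exp (z'^2 * (p.α₁ / p.α₂))) :=
          mul_lt_mul_of_pos_left h1 hl
      _ = _ := by ring
  · have herf0 : erf 0 = 0 := by simp [erf]
    have herfc0 : erfc 0 = 1 := by simp [erfc, herf0]
    simp [Params.Q, Params.φ, herfc0]
    ring
  · have hbound : ∀ᶠ z in atTop, (p.ℓ₁ / p.ℓ₂) * z ≤ p.Q z := by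
      filter_upwards [eventually_ge_atTop (0:ℝ)] with z hz
      have hE : 1 ≤ Real.exp (z^2 * (p.α₁ / p.α₂)) :=
        Real.one_le_exp (by positivity)
      have hφ := (hφ_ge z hz).le
      have hEpos := Real.exp_pos (z^2 * (p.α₁ / p.α₂))
      unfold Params.Q
      have h1 : (p.ℓ₁ / p.ℓ₂) * z ≤ (p.ℓ₁ / p.ℓ₂) * z * Real.exp (z^2 * (p.α₁ / p.α₂)) := by
        nlinarith [mul_nonneg hl.le hz]
      have h2 : (p.ℓ₁ / p.ℓ₂) * z * Real.exp (z^2 * (p.α₁ / p.α₂))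
          ≤ p.ℓ₁ / p.ℓ₂ * p.φ z * Real.exp (z^2 * (p.α₁ / p.α₂)) := by
        apply mul_le_mul_of_nonneg_right _ hEpos.le
        exact mul_le_mul_of_nonneg_left hφ hl.le
      linarith
    exact tendsto_atTop_mono' atTop hbound
      (Filter.Tendsto.const_mul_atTop hl tendsto_id)
end
end
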